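/- Define c : {(k02,k12,k21,V,Vmax,Km) ∈ ℝ^6 : V > 0, Km > 0, k02 > 0, k12 > 0, k21 > 0, Vmax > 0} → ℝ^6 by c = (1/V, 1/Km, (k02+k12)/V, k02·k21, k02+k12+k21+Vmax/Km, k02·k21+(k02+k12)·Vmax/Km). Then c is injective. -/
import Mathlib


theorem stmt_11
    (c : (Fin 6 → ℝ) → (Fin 6 → ℝ))
    (hc : ∀ p : Fin 6 → ℝ,
      c p = ![ 1 / p 3, 1 / p 5, (p 0 + p 1) / p 3, p 0 * p 2,
               p 0 + p 1 + p 2 + p 4 / p 5,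
               p 0 * p 2 + (p 0 + p 1) * p 4 / p 5 ]) :
    Set.InjOn c {p : Fin 6 → ℝ |
      0 < p 0 ∧ 0 < p 1 ∧ 0 < p 2 ∧ 0 < p 3 ∧ 0 < p 4 ∧ 0 < p 5} := by
  intro p hp q hq h
  obtain ⟨hp0, hp1, hp2, hp3, hp4, hp5⟩ := hp
  obtain ⟨hq0, hq1, hq2, hq3, hq4, hq5⟩ := hq
  rw [hc p, hc q] at h
  have e0 : 1 / p 3 = 1 / q 3 := congrFun h 0
  have e1 : 1 / p 5 = 1 / q 5 := congrFun h 1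
  have e2 : (p 0 + p 1) / p 3 = (q 0 + q 1) / q 3 := congrFun h 2
  have e3 : p 0 * p 2 = q 0 * q 2 := congrFun h 3
  have e4 : p 0 + p 1 + p 2 + p 4 / p 5 = q 0 + q 1 + q 2 + q 4 / q 5 := congrFun h 4
  have e5 : p 0 * p 2 + (p 0 + p 1) * p 4 / p 5 = q 0 * q 2 + (q 0 + q 1) * q 4 / q 5 := congrFun h 5
  have h3 : p 3 = q 3 := by
    field_simp at e0; linarith
  have h5 : p 5 = q 5 := by
    field_simp at e1; linarith
  have hs : p 0 + p 1 = q 0 + q 1 := by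
    rw [h3] at e2
    field_simp at e2; linarith
  have h4 : p 4 = q 4 := by
    rw [h5] at e5
    field_simp at e5
    have : (p 0 + p 1) * p 4 = (q 0 + q 1) * q 4 := by nlinarith [e3]
    rw [← hs] at this
    have hpos : 0 < p 0 + p 1 := by linarith
    nlinarith
  have h2 : p 2 = q 2 := by
    rw [h5, h4] at e4
    linarith
  have h0 : p 0 = q 0 := by
    rw [h2] at e3
    exact mul_right_cancel₀ (ne_of_gt hq2) e3
  have h1 : p 1 = q 1 := by linarith
  clear h hc e0 e1 e2 e3 e4 e5
  funext i
  fin_cases i <;> assumption
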